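/- arXiv:0812.3960 — 5 statements merged into one kernel-verified Lean document; each statement's English description precedes it below -/
import Mathlib

section
/- Let K > 0 and 0 < τ₀ ≤ T. If a : [τ₀, T] → ℝ is differentiable and satisfies a′(τ) + a(τ)² ≤ K² for all τ ∈ [τ₀, T], and a(τ₀) ≤ K·coth(Kτ₀), then a(τ) ≤ K·coth(Kτ) for all τ ∈ [τ₀, T]. -/
/-- Hyperbolic cotangent. -/
noncomputable def coth (x : ℝ) : ℝ := Real.cosh x / Real.sinh x

lemma coth_hasDerivAt {x : ℝ} (hx : x ≠ 0) :
    HasDerivAt coth (1 - coth x ^ 2) x := by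
  have hs : Real.sinh x ≠ 0 := Real.sinh_ne_zero.mpr hx
  have h := (Real.hasDerivAt_cosh x).div (Real.hasDerivAt_sinh x) hs
  refine h.congr_deriv ?_
  have hid : Real.cosh x ^ 2 - Real.sinh x ^ 2 = 1 := Real.cosh_sq_sub_sinh_sq x
  unfold coth
  field_simp [coth]

lemma coth_pos {x : ℝ} (hx : 0 < x) : 0 < coth x :=
  div_pos (Real.cosh_pos x) (Real.sinh_pos_iff.mpr hx)

/-- Riccati comparison: if `a` is differentiable on `[τ₀, T]` (with `0 < τ₀ ≤ T`) and satisfies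
`a′(τ) + a(τ)² ≤ K²` there, and `a(τ₀) ≤ K·coth(Kτ₀)`, then `a(τ) ≤ K·coth(Kτ)` on `[τ₀, T]`. -/
theorem stmt_2 (K τ₀ T : ℝ) (hK : 0 < K) (hτ₀ : 0 < τ₀) (hT : τ₀ ≤ T)
    (a a' : ℝ → ℝ)
    (hderiv : ∀ τ ∈ Set.Icc τ₀ T, HasDerivWithinAt a (a' τ) (Set.Icc τ₀ T) τ)
    (hriccati : ∀ τ ∈ Set.Icc τ₀ T, a' τ + (a τ) ^ 2 ≤ K ^ 2)
    (hinit : a τ₀ ≤ K * coth (K * τ₀)) :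
    ∀ τ ∈ Set.Icc τ₀ T, a τ ≤ K * coth (K * τ) := by
  -- derivative of the barrier core b(t) = K coth(Kt)
  have hb : ∀ x ∈ Set.Icc τ₀ T, HasDerivAt (fun t => K * coth (K * t))
      (K ^ 2 * (1 - coth (K * x) ^ 2)) x := by
    intro x hx
    have hxpos : 0 < x := lt_of_lt_of_le hτ₀ hx.1
    have hKx : K * x ≠ 0 := by positivity
    have h0 : HasDerivAt (fun t : ℝ => K * t) K x := by
      simpa using (hasDerivAt_id x).const_mul K
    have h1 : HasDerivAt (fun t : ℝ => coth (K * t)) ((1 - coth (K * x) ^ 2) * K) x :=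
      (coth_hasDerivAt hKx).comp x h0
    have := h1.const_mul K
    refine this.congr_deriv ?_
    ring
  have hcontb : ContinuousOn (fun t => K * coth (K * t)) (Set.Icc τ₀ T) :=
    fun x hx => ((hb x hx).continuousAt).continuousWithinAt
  have hconta : ContinuousOn a (Set.Icc τ₀ T) :=
    fun x hx => (hderiv x hx).continuousWithinAt
  intro τ hτ
  have key : ∀ ε > (0:ℝ), a τ ≤ K * coth (K * τ) + ε * Real.exp τ := by
    intro ε hε
    set B : ℝ → ℝ := fun t => K * coth (K * t) + ε * Real.exp t with hBdef
    set B' : ℝ → ℝ := fun t => K ^ 2 * (1 - coth (K * t) ^ 2) + ε * Real.exp t with hB'def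
    have main : ∀ ⦃x⦄, x ∈ Set.Icc τ₀ T → a x ≤ B x := by
      refine image_le_of_deriv_right_lt_deriv_boundary' (f' := a') (B' := B') hconta ?_ ?_ ?_ ?_ ?_
      · intro x hx
        exact (hderiv x (Set.mem_Icc_of_Ico hx)).mono_of_mem_nhdsWithin (Icc_mem_nhdsGE_of_mem hx)
      · have : 0 < ε * Real.exp τ₀ := by positivity
        simp only [hBdef]
        linarith
      · exact hcontb.add ((Real.continuous_exp.continuousOn).const_smul ε)
      · intro x hx
        exact (((hb x (Set.mem_Icc_of_Ico hx)).add
          ((Real.hasDerivAt_exp x).const_mul ε)).hasDerivWithinAt)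
      · intro x hx heq
        have hxI := Set.mem_Icc_of_Ico hx
        have hxpos : 0 < x := lt_of_lt_of_le hτ₀ hxI.1
        have hcothpos : 0 < coth (K * x) := coth_pos (by positivity)
        have hexp : 0 < Real.exp x := Real.exp_pos x
        have hric := hriccati x hxI
        have : a x = K * coth (K * x) + ε * Real.exp x := heq
        rw [this] at hric
        simp only [hB'def]
        nlinarith [mul_pos hε hexp, mul_pos (mul_pos hK hcothpos) (mul_pos hε hexp),
          sq_nonneg (ε * Real.exp x)]
    exact main hτ
  by_contra hcon
  push_neg at hcon
  have hexp : 0 < Real.exp τ := Real.exp_pos τ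
  have hd : 0 < a τ - K * coth (K * τ) := by linarith
  have := key ((a τ - K * coth (K * τ)) / (2 * Real.exp τ)) (by positivity)
  have h2 : (a τ - K * coth (K * τ)) / (2 * Real.exp τ) * Real.exp τ
      = (a τ - K * coth (K * τ)) / 2 := by
    field_simp
  rw [h2] at this
  linarith
end

section
/- Let K > 0 and 0 < τ₀ ≤ T < π/K. If a : [τ₀, T] → ℝ is differentiable and satisfies a′(τ) + a(τ)² ≥ −K² for all τ ∈ [τ₀, T], and a(τ₀) ≥ K·cot(Kτ₀), then a(τ) ≥ K·cot(Kτ) for all τ ∈ [τ₀, T]. -/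
set_option maxHeartbeats 1000000

open Set Real

private lemma cot_hasDerivAt {x : ℝ} (hx : Real.sin x ≠ 0) :
    HasDerivAt Real.cot (-(1 / Real.sin x ^ 2)) x := by
  have h : HasDerivAt (fun y => Real.cos y / Real.sin y)
      ((-Real.sin x * Real.sin x - Real.cos x * Real.cos x) / Real.sin x ^ 2) x :=
    (Real.hasDerivAt_cos x).div (Real.hasDerivAt_sin x) hx
  have heq : (-Real.sin x * Real.sin x - Real.cos x * Real.cos x) / Real.sin x ^ 2
      = -(1 / Real.sin x ^ 2) := by
    have h1 : -Real.sin x * Real.sin x - Real.cos x * Real.cos x = -1 := by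
      nlinarith [Real.sin_sq_add_cos_sq x]
    rw [h1, neg_div, one_div]
  rw [heq] at h
  refine h.congr_of_eventuallyEq ?_
  filter_upwards [Real.continuous_sin.continuousAt.eventually_ne hx] with y hy
  exact Real.cot_eq_cos_div_sin y

/-- Riccati comparison from below: if `a` is differentiable on `[τ₀, T]`
(with `0 < τ₀ ≤ T < π/K`) and satisfies `a′(τ) + a(τ)² ≥ −K²` there, and
`a(τ₀) ≥ K·cot(Kτ₀)`, then `a(τ) ≥ K·cot(Kτ)` on `[τ₀, T]`. -/
theorem stmt_3 (K τ₀ T : ℝ) (hK : 0 < K) (hτ₀ : 0 < τ₀) (hT : τ₀ ≤ T)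
    (hTπ : T < Real.pi / K)
    (a a' : ℝ → ℝ)
    (hderiv : ∀ τ ∈ Set.Icc τ₀ T, HasDerivWithinAt a (a' τ) (Set.Icc τ₀ T) τ)
    (hriccati : ∀ τ ∈ Set.Icc τ₀ T, -K ^ 2 ≤ a' τ + (a τ) ^ 2)
    (hinit : K * Real.cot (K * τ₀) ≤ a τ₀) :
    ∀ τ ∈ Set.Icc τ₀ T, K * Real.cot (K * τ) ≤ a τ := by
  set k : ℝ → ℝ := fun τ => K * Real.cot (K * τ) with hkdef
  have hKT : K * T < Real.pi := by
    rw [lt_div_iff₀ hK] at hTπ; linarith [hTπ]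
  -- sin (K τ) > 0 on [τ₀, T]
  have hsin : ∀ τ ∈ Icc τ₀ T, 0 < Real.sin (K * τ) := by
    intro τ hτ
    apply Real.sin_pos_of_pos_of_lt_pi
    · have := hτ.1; nlinarith
    · have := hτ.2; nlinarith
  -- derivative of k
  have hkderiv : ∀ τ ∈ Icc τ₀ T, HasDerivAt k (-(K ^ 2 + (k τ) ^ 2)) τ := by
    intro τ hτ
    have hs := (hsin τ hτ).ne'
    have h1 : HasDerivAt (fun t : ℝ => K * t) K τ := by
      simpa using (hasDerivAt_id τ).const_mul K
    have h2 : HasDerivAt (fun t => Real.cot (K * t)) (-(1 / Real.sin (K * τ) ^ 2) * K) τ :=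
      (cot_hasDerivAt hs).comp τ h1
    have h3 := h2.const_mul K
    have heq : K * (-(1 / Real.sin (K * τ) ^ 2) * K) = -(K ^ 2 + (k τ) ^ 2) := by
      have hsq : Real.sin (K * τ) ^ 2 ≠ 0 := pow_ne_zero _ hs
      have hcot : Real.cot (K * τ) = Real.cos (K * τ) / Real.sin (K * τ) :=
        Real.cot_eq_cos_div_sin _
      rw [hkdef]
      simp only
      rw [hcot]
      field_simp
      linear_combination Real.sin_sq_add_cos_sq (K * τ)
    rw [heq] at h3
    exact h3
  have hkcont : ContinuousOn k (Icc τ₀ T) := fun τ hτ =>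
    (hkderiv τ hτ).continuousAt.continuousWithinAt
  -- bound on k
  obtain ⟨M, hM⟩ := (isCompact_Icc : IsCompact (Icc τ₀ T)).exists_bound_of_continuousOn hkcont
  set C : ℝ := 2 * M + 1 with hCdef
  have hM0 : 0 ≤ M := le_trans (norm_nonneg _) (hM τ₀ ⟨le_refl _, hT⟩)
  have hC0 : 0 < C := by positivity
  intro τ hτ
  -- suffices to prove up to any δ > 0
  by_contra hcon
  push_neg at hcon
  have hcon' : a τ < k τ := hcon
  set δ : ℝ := (k τ - a τ) / 2 with hδdef
  have hδ0 : 0 < δ := by rw [hδdef]; linarith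
  set ε : ℝ := min (δ / 2) (1 / 2) / Real.exp (C * T) with hεdef
  have hexp0 : 0 < Real.exp (C * T) := Real.exp_pos _
  have hε0 : 0 < ε := by
    apply div_pos _ hexp0
    exact lt_min (by linarith) (by norm_num)
  have hεT : ε * Real.exp (C * T) = min (δ / 2) (1 / 2) := by
    rw [hεdef]; field_simp
  have hεT1 : ε * Real.exp (C * T) < 1 := by
    rw [hεT]; exact lt_of_le_of_lt (min_le_right _ _) (by norm_num)
  have hεTδ : ε * Real.exp (C * T) ≤ δ := by
    rw [hεT]; exact le_trans (min_le_left _ _) (by linarith)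
  -- apply the fencing theorem
  have key : ∀ ⦃x⦄, x ∈ Icc τ₀ T → (fun t => -a t) x ≤
      (fun t => -k t + ε * Real.exp (C * t)) x := by
    refine image_le_of_deriv_right_lt_deriv_boundary'
      (f := fun t => -a t) (f' := fun t => -a' t)
      (B := fun t => -k t + ε * Real.exp (C * t))
      (B' := fun t => (K ^ 2 + (k t) ^ 2) + ε * (Real.exp (C * t) * C))
      ?_ ?_ ?_ ?_ ?_ ?_
    · exact fun t ht => ((hderiv t ht).continuousWithinAt).neg
    · intro x hx
      have hmem : Icc τ₀ T ∈ nhdsWithin x (Ici x) := Icc_mem_nhdsGE_of_mem hx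
      exact ((hderiv x (Ico_subset_Icc_self hx)).mono_of_mem_nhdsWithin hmem).neg
    · have hinit' : k τ₀ ≤ a τ₀ := hinit
      have hpos : 0 < ε * Real.exp (C * τ₀) := mul_pos hε0 (Real.exp_pos _)
      linarith
    · refine ContinuousOn.add (hkcont.neg) ?_
      exact (continuous_const.mul
        (Real.continuous_exp.comp (continuous_const.mul continuous_id))).continuousOn
    · intro x hx
      have hx' := Ico_subset_Icc_self hx
      have h1 := (hkderiv x hx').neg
      have h2 : HasDerivAt (fun t => Real.exp (C * t)) (Real.exp (C * x) * C) x := by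
        have : HasDerivAt (fun t : ℝ => C * t) C x := by
          simpa using (hasDerivAt_id x).const_mul C
        exact this.exp
      have h3 := h1.add (h2.const_mul ε)
      have : -(-(K ^ 2 + k x ^ 2)) = K ^ 2 + k x ^ 2 := by ring
      rw [this] at h3
      exact h3.hasDerivWithinAt
    · intro x hx heqx
      have hx' := Ico_subset_Icc_self hx
      have hric := hriccati x hx'
      have hax : a x = k x - ε * Real.exp (C * x) := by
        linarith
      have hkb : -2 * k x ≤ 2 * M := by
        have := hM x hx'
        have := abs_le.mp (by simpa using this)
        linarith [this.1]
      have hhx : 0 < Real.exp (C * x) := Real.exp_pos _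
      have hhle : Real.exp (C * x) ≤ Real.exp (C * T) :=
        Real.exp_le_exp.mpr (by nlinarith [hx'.2])
      have hεh1 : ε * Real.exp (C * x) < 1 := by
        calc ε * Real.exp (C * x) ≤ ε * Real.exp (C * T) := by nlinarith
        _ < 1 := hεT1
      have h1 : -a' x ≤ K ^ 2 + a x ^ 2 := by linarith
      have h2 : K ^ 2 + a x ^ 2 < K ^ 2 + k x ^ 2 + ε * (Real.exp (C * x) * C) := by
        rw [hax, hCdef]
        nlinarith [mul_pos hε0 hhx]
      linarith
  have hkey := key hτ
  simp only at hkey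
  have hle : ε * Real.exp (C * τ) ≤ δ := by
    have : Real.exp (C * τ) ≤ Real.exp (C * T) := Real.exp_le_exp.mpr (by nlinarith [hτ.2])
    calc ε * Real.exp (C * τ) ≤ ε * Real.exp (C * T) := by nlinarith
    _ ≤ δ := hεTδ
  rw [hδdef] at hle
  linarith
end

section
/- Let (X, μ) be a finite measure space, f : X → [0, ∞) measurable, χ > 1, p₀ ≥ 1, and C ≥ 1. Set p_k = p₀·χ^k for k ∈ ℕ, and suppose f ∈ L^{p₀}(μ) and that for every k ∈ ℕ one has ‖f‖_{L^{p_{k+1}}(μ)} ≤ (C·p_k²)^{1/p_k}·‖f‖_{L^{p_k}(μ)}. Then f is essentially bounded and ess sup f ≤ exp( Σ_{k=0}^∞ p_k^{-1}·log(C·p_k²) ) · ‖f‖_{L^{p₀}(μ)}, the series being convergent. -/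
open MeasureTheory Filter
open scoped ENNReal NNReal

/-- Abstract Nash–Moser iteration: on a finite measure space, if a nonnegative measurable
function `f` lies in `L^{p₀}` and satisfies the iterative norm bounds
`‖f‖_{L^{p_{k+1}}} ≤ (C p_k²)^{1/p_k} ‖f‖_{L^{p_k}}` along the exponents `p_k = p₀ χ^k`
(with `χ > 1`, `p₀ ≥ 1`, `C ≥ 1`), then the series `Σ p_k⁻¹ log(C p_k²)` converges and
`ess sup f ≤ exp(Σ_k p_k⁻¹ log(C p_k²)) · ‖f‖_{L^{p₀}}`. -/
theorem stmt_13 {X : Type*} [MeasurableSpace X] (μ : Measure X) [IsFiniteMeasure μ]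
    (f : X → ℝ) (hf : Measurable f) (hf0 : ∀ x, 0 ≤ f x)
    (χ p₀ C : ℝ) (hχ : 1 < χ) (hp₀ : 1 ≤ p₀) (hC : 1 ≤ C)
    (p : ℕ → ℝ) (hp : ∀ k, p k = p₀ * χ ^ k)
    (hmem : (∫⁻ x, ENNReal.ofReal (f x) ^ p₀ ∂μ) < ⊤)
    (hiter : ∀ k,
      (∫⁻ x, ENNReal.ofReal (f x) ^ p (k + 1) ∂μ) ^ (1 / p (k + 1)) ≤
        ENNReal.ofReal ((C * p k ^ 2) ^ (1 / p k)) *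
          (∫⁻ x, ENNReal.ofReal (f x) ^ p k ∂μ) ^ (1 / p k)) :
    Summable (fun k => (1 / p k) * Real.log (C * p k ^ 2)) ∧
    essSup (fun x => ENNReal.ofReal (f x)) μ ≤
      ENNReal.ofReal (Real.exp (∑' k, (1 / p k) * Real.log (C * p k ^ 2))) *
        (∫⁻ x, ENNReal.ofReal (f x) ^ p₀ ∂μ) ^ (1 / p₀) := by
  have hχ0 : (0:ℝ) < χ := lt_trans one_pos hχ
  have hp₀0 : (0:ℝ) < p₀ := lt_of_lt_of_le one_pos hp₀
  have hC0 : (0:ℝ) < C := lt_of_lt_of_le one_pos hC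
  have hpk1 : ∀ k, 1 ≤ p k := by
    intro k
    rw [hp k]
    calc (1:ℝ) = 1 * 1 := (one_mul 1).symm
      _ ≤ p₀ * χ ^ k := by
          apply mul_le_mul hp₀ (one_le_pow₀ hχ.le) zero_le_one hp₀0.le
  have hpk0 : ∀ k, 0 < p k := fun k => lt_of_lt_of_le one_pos (hpk1 k)
  set s : ℕ → ℝ := fun k => (1 / p k) * Real.log (C * p k ^ 2) with hs
  have hCp1 : ∀ k, 1 ≤ C * p k ^ 2 := by
    intro k
    calc (1:ℝ) = 1 * 1 ^ 2 := by norm_num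
      _ ≤ C * p k ^ 2 := by
          apply mul_le_mul hC (pow_le_pow_left₀ zero_le_one (hpk1 k) 2) (by norm_num) hC0.le
  have hCp : ∀ k, 0 < C * p k ^ 2 := fun k => lt_of_lt_of_le one_pos (hCp1 k)
  have hs_nonneg : ∀ k, 0 ≤ s k := fun k =>
    mul_nonneg (le_of_lt (one_div_pos.mpr (hpk0 k))) (Real.log_nonneg (hCp1 k))
  have hrinv : |χ⁻¹| < 1 := by
    rw [abs_of_pos (inv_pos.mpr hχ0)]
    exact inv_lt_one_of_one_lt₀ hχ
  have hs_eq : ∀ k, s k = ((Real.log C + 2 * Real.log p₀) / p₀) * (χ⁻¹) ^ k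
      + ((2 * Real.log χ) / p₀) * ((k : ℝ) * (χ⁻¹) ^ k) := by
    intro k
    have h1 : Real.log (C * p k ^ 2)
        = Real.log C + 2 * Real.log p₀ + 2 * k * Real.log χ := by
      rw [Real.log_mul (ne_of_gt hC0) (ne_of_gt (pow_pos (hpk0 k) 2)),
        Real.log_pow, hp k,
        Real.log_mul (ne_of_gt hp₀0) (ne_of_gt (pow_pos hχ0 k)), Real.log_pow]
      push_cast; ring
    have h2 : 1 / p k = (1 / p₀) * χ⁻¹ ^ k := by
      rw [hp k, one_div, mul_inv, ← inv_pow, one_div]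
    show (1 / p k) * Real.log (C * p k ^ 2) = _
    rw [h1, h2]
    ring
  have hsummable : Summable s := by
    have h1 : Summable (fun k : ℕ =>
        ((Real.log C + 2 * Real.log p₀) / p₀) * (χ⁻¹) ^ k) :=
      (summable_geometric_of_lt_one (inv_pos.mpr hχ0).le
        (inv_lt_one_of_one_lt₀ hχ)).mul_left _
    have h2 : Summable (fun k : ℕ =>
        ((2 * Real.log χ) / p₀) * ((k : ℝ) * (χ⁻¹) ^ k)) := by
      have h := summable_pow_mul_geometric_of_norm_lt_one (R := ℝ) 1
        (r := χ⁻¹) (by rwa [Real.norm_eq_abs])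
      simpa [pow_one] using h.mul_left ((2 * Real.log χ) / p₀)
    exact (h1.add h2).congr (fun k => (hs_eq k).symm)
  refine ⟨hsummable, ?_⟩
  set g : X → ℝ≥0∞ := fun x => ENNReal.ofReal (f x) with hgdef
  have hg : Measurable g := ENNReal.measurable_ofReal.comp hf
  have hgm : ∀ q : ℝ, Measurable fun x => g x ^ q := fun q => hg.pow_const q
  set A : ℕ → ℝ≥0∞ := fun k => (∫⁻ x, g x ^ p k ∂μ) ^ (1 / p k) with hA
  have hp0 : p 0 = p₀ := by rw [hp 0]; simp
  set M : ℝ≥0∞ := ENNReal.ofReal (Real.exp (∑' k, s k)) *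
      (∫⁻ x, g x ^ p₀ ∂μ) ^ (1 / p₀) with hM
  -- iteration bound
  have hAk : ∀ k, A k ≤
      ENNReal.ofReal (Real.exp (∑ j ∈ Finset.range k, s j)) * A 0 := by
    intro k
    induction k with
    | zero => simp
    | succ k ih =>
      have hfac : ((C * p k ^ 2) ^ (1 / p k)) = Real.exp (s k) := by
        rw [Real.rpow_def_of_pos (hCp k), hs]
        ring_nf
      calc A (k + 1) ≤ ENNReal.ofReal ((C * p k ^ 2) ^ (1 / p k)) * A k := hiter k
        _ ≤ ENNReal.ofReal (Real.exp (s k)) *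
            (ENNReal.ofReal (Real.exp (∑ j ∈ Finset.range k, s j)) * A 0) := by
            rw [hfac]; exact mul_le_mul_right ih _
        _ = ENNReal.ofReal (Real.exp (∑ j ∈ Finset.range (k + 1), s j)) * A 0 := by
            rw [← mul_assoc, ← ENNReal.ofReal_mul (Real.exp_nonneg _), ← Real.exp_add,
              Finset.sum_range_succ, add_comm]
  have hAM : ∀ k, A k ≤ M := by
    intro k
    refine (hAk k).trans ?_
    rw [hM]
    have hA0 : A 0 = (∫⁻ x, g x ^ p₀ ∂μ) ^ (1 / p₀) := by rw [hA]; simp [hp0]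
    rw [hA0]
    refine mul_le_mul_left (ENNReal.ofReal_le_ofReal (Real.exp_le_exp.mpr ?_)) _
    exact hsummable.sum_le_tsum _ (fun i _ => hs_nonneg i)
  -- conclude
  show essSup g μ ≤ M
  by_cases hI0 : (∫⁻ x, g x ^ p₀ ∂μ) = 0
  · have hz : (fun x => g x ^ p₀) =ᵐ[μ] 0 := (lintegral_eq_zero_iff (hgm p₀)).mp hI0
    have hgz : g ≤ᵐ[μ] fun _ => (0 : ℝ≥0∞) := by
      filter_upwards [hz] with x hx
      have : g x ^ p₀ = 0 := hx
      rcases (ENNReal.rpow_eq_zero_iff.mp this) with ⟨h, _⟩ | ⟨h, hneg⟩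
      · exact h.le
      · exact absurd hneg (not_lt.mpr hp₀0.le)
    exact (essSup_le_of_ae_le 0 hgz).trans zero_le
  · have hItop : (∫⁻ x, g x ^ p₀ ∂μ) ≠ ⊤ := hmem.ne
    have hA0top : (∫⁻ x, g x ^ p₀ ∂μ) ^ (1 / p₀) ≠ ⊤ :=
      (ENNReal.rpow_lt_top_of_nonneg (by positivity) hItop).ne
    have hMtop : M ≠ ⊤ := ENNReal.mul_ne_top ENNReal.ofReal_ne_top hA0top
    by_contra hcon
    push_neg at hcon
    obtain ⟨b, hMb, hbe⟩ := exists_between hcon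
    have hbtop : b ≠ ⊤ := (hbe.trans_le le_top).ne
    set S : Set X := {x | b < g x} with hS
    have hμS : μ S ≠ 0 := by
      intro hzero
      have : g ≤ᵐ[μ] fun _ => b := by
        rw [Filter.EventuallyLE, ae_iff]
        convert hzero using 2
        ext x
        simp [hS, not_le]
      exact absurd hbe (not_lt.mpr (essSup_le_of_ae_le b this))
    have hμStop : μ S ≠ ⊤ := measure_ne_top μ S
    have hcheb : ∀ k, b * (μ S) ^ (1 / p k) ≤ A k := by
      intro k
      have h1 : b ^ (p k) * μ S ≤ ∫⁻ x, g x ^ p k ∂μ := by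
        calc b ^ (p k) * μ S = ∫⁻ _ in S, b ^ (p k) ∂μ := (setLIntegral_const S _).symm
          _ ≤ ∫⁻ x in S, g x ^ p k ∂μ :=
              setLIntegral_mono (hgm (p k))
                (fun x hx => ENNReal.rpow_le_rpow (le_of_lt hx) (hpk0 k).le)
          _ ≤ ∫⁻ x, g x ^ p k ∂μ := setLIntegral_le_lintegral S _
      have h2 := ENNReal.rpow_le_rpow h1 (le_of_lt (one_div_pos.mpr (hpk0 k)))
      rwa [ENNReal.mul_rpow_of_nonneg _ _ (le_of_lt (one_div_pos.mpr (hpk0 k))),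
        ← ENNReal.rpow_mul, mul_one_div_cancel (ne_of_gt (hpk0 k)),
        ENNReal.rpow_one] at h2
    have hbM : ∀ k, b * (μ S) ^ (1 / p k) ≤ M := fun k => (hcheb k).trans (hAM k)
    -- limit
    set m : ℝ := (μ S).toReal with hm
    have hm0 : 0 < m := ENNReal.toReal_pos hμS hμStop
    have hμSm : μ S = ENNReal.ofReal m := (ENNReal.ofReal_toReal hμStop).symm
    have htend0 : Tendsto (fun k => 1 / p k) atTop (nhds 0) := by
      have hpt : Tendsto p atTop atTop := by
        have h1 : Tendsto (fun k : ℕ => χ ^ k) atTop atTop :=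
          tendsto_pow_atTop_atTop_of_one_lt hχ
        have h2 : Tendsto (fun k : ℕ => p₀ * χ ^ k) atTop atTop :=
          h1.const_mul_atTop hp₀0
        exact h2.congr (fun k => (hp k).symm)
      exact hpt.inv_tendsto_atTop.congr (fun k => by simp [one_div])
    have hmt : Tendsto (fun k => (μ S) ^ (1 / p k)) atTop (nhds 1) := by
      have hreal : Tendsto (fun k => m ^ (1 / p k)) atTop (nhds 1) := by
        have hc : ContinuousAt (m ^ ·) (0 : ℝ) := Real.continuousAt_const_rpow hm0.ne'
        have := hc.tendsto.comp htend0
        simpa [Real.rpow_zero, Function.comp_def] using this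
      have := (ENNReal.tendsto_ofReal hreal)
      simp only [ENNReal.ofReal_one] at this
      refine this.congr (fun k => ?_)
      rw [hμSm, ENNReal.ofReal_rpow_of_pos hm0]
    have hlim : Tendsto (fun k => b * (μ S) ^ (1 / p k)) atTop (nhds b) := by
      have : Tendsto (fun k => b * (μ S) ^ (1 / p k)) atTop (nhds (b * 1)) :=
        ENNReal.Tendsto.const_mul hmt (Or.inl one_ne_zero)
      simpa using this
    exact absurd (le_of_tendsto' hlim hbM) hMb.not_ge
end

section
/- Let n ≥ 2, χ = n/(n−1), q > 0, δ ∈ (0, 1], C ≥ 1, and set q_i = q·χ^i. Let (X, μ) be a measure space, (A_i)_{i∈ℕ} a decreasing sequence of measurable sets with μ(A_0) < ∞, and A_∞ ⊆ ∩_i A_i measurable. Let f : X → [0, ∞) be measurable with f·1_{A_0} ∈ L^q(μ), and suppose that for every i ∈ ℕ one has ‖f·1_{A_{i+1}}‖_{L^{q_{i+1}}(μ)} ≤ (2^i·C·q_i²·δ^{-1})^{1/q_i}·‖f·1_{A_i}‖_{L^{q_i}(μ)}. Then f is essentially bounded on A_∞ and ess sup_{A_∞} f ≤ C′·δ^{−n/q}·‖f·1_{A_0}‖_{L^q(μ)},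 where C′ = exp( Σ_{i=0}^∞ q_i^{-1}·log(2^i·C·q_i²) ) depends only on n, q, and C (in particular Σ_i q_i^{-1} = n/q, which produces the factor δ^{−n/q}). -/
open MeasureTheory
open scoped ENNReal

/-- Abstract Nash–Moser iteration with nested domains: with exponents `q_i = q·χ^i`,
`χ = n/(n−1)`, a decreasing family of sets `A_i` of finite initial measure, a set
`A∞ ⊆ ∩ A_i`, and iterative bounds
`‖f·1_{A_{i+1}}‖_{L^{q_{i+1}}} ≤ (2^i C q_i² δ⁻¹)^{1/q_i} ‖f·1_{A_i}‖_{L^{q_i}}`,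
the series `Σ q_i⁻¹ log(2^i C q_i²)` converges, `Σ q_i⁻¹ = n/q`, and
`ess sup_{A∞} f ≤ C′ · δ^{−n/q} · ‖f·1_{A_0}‖_{L^q}` with
`C′ = exp(Σ_i q_i⁻¹ log(2^i C q_i²))`. -/
theorem stmt_14 {X : Type*} [MeasurableSpace X] (μ : Measure X)
    (n : ℕ) (hn : 2 ≤ n) (χ q δ C : ℝ)
    (hχ : χ = (n : ℝ) / ((n : ℝ) - 1)) (hq : 0 < q)
    (hδ : δ ∈ Set.Ioc (0 : ℝ) 1) (hC : 1 ≤ C)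
    (qs : ℕ → ℝ) (hqs : ∀ i, qs i = q * χ ^ i)
    (A : ℕ → Set X) (hAmeas : ∀ i, MeasurableSet (A i))
    (hAdec : ∀ i, A (i + 1) ⊆ A i) (hA0 : μ (A 0) < ⊤)
    (Ainf : Set X) (hAinfMeas : MeasurableSet Ainf) (hAinf : ∀ i, Ainf ⊆ A i)
    (f : X → ℝ) (hf : Measurable f) (hf0 : ∀ x, 0 ≤ f x)
    (hfq : (∫⁻ x in A 0, ENNReal.ofReal (f x) ^ q ∂μ) < ⊤)
    (hiter : ∀ i,
      (∫⁻ x in A (i + 1), ENNReal.ofReal (f x) ^ qs (i + 1) ∂μ) ^ (1 / qs (i + 1)) ≤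
        ENNReal.ofReal ((2 ^ i * C * qs i ^ 2 * δ⁻¹) ^ (1 / qs i)) *
          (∫⁻ x in A i, ENNReal.ofReal (f x) ^ qs i ∂μ) ^ (1 / qs i)) :
    Summable (fun i => (1 / qs i) * Real.log (2 ^ i * C * qs i ^ 2)) ∧
    (∑' i, 1 / qs i) = (n : ℝ) / q ∧
    essSup (fun x => ENNReal.ofReal (f x)) (μ.restrict Ainf) ≤
      ENNReal.ofReal (Real.exp (∑' i, (1 / qs i) * Real.log (2 ^ i * C * qs i ^ 2))) *
        ENNReal.ofReal (δ ^ (-(n : ℝ) / q)) *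
        (∫⁻ x in A 0, ENNReal.ofReal (f x) ^ q ∂μ) ^ (1 / q) := by
  obtain ⟨hδ0, hδ1⟩ := hδ
  have hC0 : (0:ℝ) < C := lt_of_lt_of_le one_pos hC
  have hn2 : (2:ℝ) ≤ (n:ℝ) := by exact_mod_cast hn
  have hn1 : (0:ℝ) < (n:ℝ) - 1 := by linarith
  have hχ1 : 1 < χ := by
    rw [hχ, lt_div_iff₀ hn1]; linarith
  have hχ0 : 0 < χ := by linarith
  have hqs0 : ∀ i, 0 < qs i := fun i => by rw [hqs]; positivity
  set r : ℝ := χ⁻¹ with hrdef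
  have hr0 : 0 ≤ r := by positivity
  have hr1 : r < 1 := by
    rw [hrdef]; exact inv_lt_one_of_one_lt₀ hχ1
  have hinv : ∀ i, 1 / qs i = q⁻¹ * r ^ i := by
    intro i
    rw [hqs i, one_div, mul_inv, hrdef, inv_pow]
  -- log expansion
  have hlog : ∀ i : ℕ, Real.log (2 ^ i * C * qs i ^ 2) =
      (i : ℝ) * (Real.log 2 + 2 * Real.log χ) + (Real.log C + 2 * Real.log q) := by
    intro i
    rw [hqs i]
    rw [Real.log_mul (by positivity) (by positivity),
      Real.log_mul (by positivity) (ne_of_gt hC0), Real.log_pow,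
      Real.log_pow, Real.log_mul (ne_of_gt hq) (by positivity), Real.log_pow]
    push_cast
    ring
  -- summability
  have hsum : Summable (fun i => (1 / qs i) * Real.log (2 ^ i * C * qs i ^ 2)) := by
    have h1 : Summable (fun i : ℕ => (i : ℝ) * r ^ i) := by
      have := summable_pow_mul_geometric_of_norm_lt_one (R := ℝ) 1
        (r := r) (by rwa [Real.norm_eq_abs, abs_of_nonneg hr0])
      simpa using this
    have h2 : Summable (fun i : ℕ => r ^ i) := summable_geometric_of_lt_one hr0 hr1
    have h3 := (((h1.mul_right (Real.log 2 + 2 * Real.log χ)).add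
      (h2.mul_right (Real.log C + 2 * Real.log q))).mul_left q⁻¹)
    apply h3.congr
    intro i
    rw [hinv i, hlog i]
    ring
  have hsuminv : Summable (fun i : ℕ => 1 / qs i) := by
    have h2 : Summable (fun i : ℕ => r ^ i) := summable_geometric_of_lt_one hr0 hr1
    exact (h2.mul_left q⁻¹).congr fun i => (hinv i).symm
  have htsum : (∑' i, 1 / qs i) = (n : ℝ) / q := by
    have heq : (fun i : ℕ => 1 / qs i) = fun i => q⁻¹ * r ^ i := funext hinv
    rw [heq, tsum_mul_left, tsum_geometric_of_lt_one hr0 hr1]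
    have hn0 : (n:ℝ) ≠ 0 := by linarith
    have hrn : 1 - r = ((n:ℝ))⁻¹ := by
      rw [hrdef, hχ]
      field_simp
      ring
    rw [hrn, inv_inv]
    field_simp
  refine ⟨hsum, htsum, ?_⟩
  -- notation
  set g : X → ℝ≥0∞ := fun x => ENNReal.ofReal (f x) with hgdef
  have hgmeas : Measurable g := ENNReal.measurable_ofReal.comp hf
  set I : ℕ → ℝ≥0∞ := fun i => ∫⁻ x in A i, g x ^ qs i ∂μ with hIdef
  set L : ℕ → ℝ≥0∞ := fun i => I i ^ (1 / qs i) with hLdef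
  have hq00 : qs 0 = q := by rw [hqs]; simp
  have hI0 : I 0 = ∫⁻ x in A 0, ENNReal.ofReal (f x) ^ q ∂μ := by
    rw [hIdef]; simp only [hq00]; rfl
  have hL0top : L 0 ≠ ⊤ := by
    rw [hLdef]
    exact (ENNReal.rpow_lt_top_of_nonneg (le_of_lt (by have := hqs0 0; positivity)) (by rw [hI0]; exact hfq.ne)).ne
  -- the iteration, accumulated
  have hLrec : ∀ k, L k ≤ ENNReal.ofReal (Real.exp
      (∑ i ∈ Finset.range k, (1 / qs i) * Real.log (2 ^ i * C * qs i ^ 2 * δ⁻¹))) * L 0 := by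
    intro k
    induction k with
    | zero => simp
    | succ k ih =>
      have hc : (0:ℝ) < 2 ^ k * C * qs k ^ 2 * δ⁻¹ := by
        have := hqs0 k; positivity
      have hrw : (2 ^ k * C * qs k ^ 2 * δ⁻¹) ^ (1 / qs k) =
          Real.exp ((1 / qs k) * Real.log (2 ^ k * C * qs k ^ 2 * δ⁻¹)) := by
        rw [Real.rpow_def_of_pos hc, mul_comm]
      calc L (k + 1) ≤ ENNReal.ofReal ((2 ^ k * C * qs k ^ 2 * δ⁻¹) ^ (1 / qs k)) * L k :=
            hiter k
        _ ≤ ENNReal.ofReal ((2 ^ k * C * qs k ^ 2 * δ⁻¹) ^ (1 / qs k)) *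
            (ENNReal.ofReal (Real.exp
              (∑ i ∈ Finset.range k, (1 / qs i) * Real.log (2 ^ i * C * qs i ^ 2 * δ⁻¹))) *
              L 0) := mul_le_mul_right ih _
        _ = ENNReal.ofReal (Real.exp
              (∑ i ∈ Finset.range (k + 1), (1 / qs i) * Real.log (2 ^ i * C * qs i ^ 2 * δ⁻¹))) *
              L 0 := by
            rw [← mul_assoc, hrw, ← ENNReal.ofReal_mul (Real.exp_nonneg _),
              ← Real.exp_add, Finset.sum_range_succ_comm]
  -- split away the δ part and bound partial sums
  have hδinv1 : (1:ℝ) ≤ δ⁻¹ := by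
    have := inv_anti₀ hδ0 hδ1
    simpa using this
  have hσ : ∀ k, (∑ i ∈ Finset.range k, 1 / qs i) ≤ (n : ℝ) / q := by
    intro k
    rw [← htsum]
    exact Summable.sum_le_tsum _ (fun i _ => le_of_lt (by have := hqs0 i; positivity)) hsuminv
  have hδpow : δ ^ (-(n : ℝ) / q) = (δ⁻¹) ^ ((n:ℝ)/q) := by
    rw [Real.inv_rpow hδ0.le, neg_div, Real.rpow_neg hδ0.le]
  set D : ℝ≥0∞ := ENNReal.ofReal (δ ^ (-(n : ℝ) / q)) with hDdef
  set S : ℕ → ℝ := fun k => ∑ i ∈ Finset.range k, (1 / qs i) * Real.log (2 ^ i * C * qs i ^ 2)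
    with hSdef
  have hLk : ∀ k, L k ≤ ENNReal.ofReal (Real.exp (S k)) * D * L 0 := by
    intro k
    refine (hLrec k).trans (mul_le_mul_left ?_ _)
    have hsplit : (∑ i ∈ Finset.range k, (1 / qs i) * Real.log (2 ^ i * C * qs i ^ 2 * δ⁻¹)) =
        S k + (∑ i ∈ Finset.range k, 1 / qs i) * Real.log δ⁻¹ := by
      rw [hSdef, Finset.sum_mul, ← Finset.sum_add_distrib]
      refine Finset.sum_congr rfl fun i _ => ?_
      rw [Real.log_mul (by have := hqs0 i; positivity) (by positivity)]
      ring
    rw [hsplit, Real.exp_add, ENNReal.ofReal_mul (Real.exp_nonneg _)]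
    refine mul_le_mul_right (ENNReal.ofReal_le_ofReal ?_) _
    have h1 : Real.exp ((∑ i ∈ Finset.range k, 1 / qs i) * Real.log δ⁻¹) =
        (δ⁻¹) ^ (∑ i ∈ Finset.range k, 1 / qs i) := by
      rw [Real.rpow_def_of_pos (by positivity), mul_comm]
    rw [h1, hδpow]
    exact Real.rpow_le_rpow_of_exponent_le hδinv1 (hσ k)
  -- limits
  have hexp0 : Filter.Tendsto (fun k => 1 / qs k) Filter.atTop (nhds 0) := by
    have h0 : Filter.Tendsto (fun k : ℕ => q⁻¹ * r ^ k) Filter.atTop (nhds (q⁻¹ * 0)) :=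
      (tendsto_pow_atTop_nhds_zero_of_lt_one hr0 hr1).const_mul _
    have heq : (fun k : ℕ => 1 / qs k) = fun k => q⁻¹ * r ^ k := funext hinv
    rw [heq]
    simpa using h0
  have hStend : Filter.Tendsto (fun k => ENNReal.ofReal (Real.exp (S k)) * D * L 0)
      Filter.atTop (nhds (ENNReal.ofReal (Real.exp
        (∑' i, (1 / qs i) * Real.log (2 ^ i * C * qs i ^ 2))) * D * L 0)) := by
    have h1 : Filter.Tendsto S Filter.atTop
        (nhds (∑' i, (1 / qs i) * Real.log (2 ^ i * C * qs i ^ 2))) :=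
      hsum.hasSum.tendsto_sum_nat
    have h2 : Filter.Tendsto (fun k => ENNReal.ofReal (Real.exp (S k))) Filter.atTop
        (nhds (ENNReal.ofReal (Real.exp
          (∑' i, (1 / qs i) * Real.log (2 ^ i * C * qs i ^ 2))))) :=
      (ENNReal.continuous_ofReal.tendsto _).comp
        ((Real.continuous_exp.tendsto _).comp h1)
    have hne : ENNReal.ofReal (Real.exp
        (∑' i, (1 / qs i) * Real.log (2 ^ i * C * qs i ^ 2))) ≠ 0 :=
      (ENNReal.ofReal_pos.mpr (Real.exp_pos _)).ne'
    exact ENNReal.Tendsto.mul_const (ENNReal.Tendsto.mul_const h2 (Or.inl hne))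
      (Or.inr hL0top)
  -- essSup bound
  set ν : Measure X := μ.restrict Ainf with hνdef
  refine le_of_forall_lt fun c hc => ?_
  obtain ⟨a, hca, haE⟩ := exists_between hc
  refine lt_of_lt_of_le hca ?_
  have ha_top : a ≠ ⊤ := (lt_of_lt_of_le haE le_top).ne
  have hm : ν {x | a < g x} ≠ 0 := by
    intro h0
    have hae : (fun x => g x) ≤ᵐ[ν] fun _ => a := by
      rw [Filter.EventuallyLE, ae_iff]
      convert h0 using 2
      ext x
      simp [not_le]
    exact absurd (essSup_le_of_ae_le a hae) (not_le.2 haE)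
  set m := ν {x | a < g x} with hmdef
  have hm0 : 0 < m := pos_iff_ne_zero.mpr hm
  have hmtop : m ≠ ⊤ := by
    refine (lt_of_le_of_lt ?_ hA0).ne
    calc m ≤ ν Set.univ := measure_mono (Set.subset_univ _)
      _ = μ Ainf := by rw [hνdef, Measure.restrict_apply_univ]
      _ ≤ μ (A 0) := measure_mono (hAinf 0)
  -- lower bound for L k
  have hlow : ∀ k, a * m ^ (1 / qs k) ≤ L k := by
    intro k
    have h1 : a ^ qs k * m ≤ ∫⁻ x, g x ^ qs k ∂ν := by
      refine le_trans ?_ (mul_meas_ge_le_lintegral₀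
        ((hgmeas.pow_const (qs k)).aemeasurable) (a ^ qs k))
      refine mul_le_mul_right (measure_mono ?_) _
      intro x hx
      exact ENNReal.rpow_le_rpow (le_of_lt hx) (hqs0 k).le
    have h2 : (∫⁻ x, g x ^ qs k ∂ν) ≤ I k := by
      rw [hνdef, hIdef]
      exact lintegral_mono_set (hAinf k)
    have h3 := ENNReal.rpow_le_rpow (h1.trans h2) (one_div_nonneg.mpr (hqs0 k).le)
    calc a * m ^ (1 / qs k) = (a ^ qs k * m) ^ (1 / qs k) := by
          rw [ENNReal.mul_rpow_of_nonneg _ _ (one_div_nonneg.mpr (hqs0 k).le),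
            ← ENNReal.rpow_mul, mul_one_div, div_self (hqs0 k).ne', ENNReal.rpow_one]
      _ ≤ L k := h3
    done
  -- a * m ^ (1/qs k) tends to a
  have hmtend : Filter.Tendsto (fun k => a * m ^ (1 / qs k)) Filter.atTop (nhds a) := by
    have hmr : ∀ k, m ^ (1 / qs k) = ENNReal.ofReal (m.toReal ^ (1 / qs k)) := by
      intro k
      rw [← ENNReal.ofReal_rpow_of_pos (ENNReal.toReal_pos hm0.ne' hmtop),
        ENNReal.ofReal_toReal hmtop]
    have hmtr : (0:ℝ) < m.toReal := ENNReal.toReal_pos hm0.ne' hmtop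
    have hraux : Filter.Tendsto (fun k => m.toReal ^ (1 / qs k)) Filter.atTop (nhds 1) := by
      have h1 : Filter.Tendsto (fun k => Real.log m.toReal * (1 / qs k)) Filter.atTop
          (nhds (Real.log m.toReal * 0)) := hexp0.const_mul _
      have h2 := (Real.continuous_exp.tendsto _).comp h1
      simp only [mul_zero, Real.exp_zero, Function.comp_def] at h2
      refine h2.congr fun k => ?_
      rw [Real.rpow_def_of_pos hmtr]
    have h3 := (ENNReal.continuous_ofReal.tendsto _).comp hraux
    simp only [Function.comp_def, ENNReal.ofReal_one] at h3
    have h4 : Filter.Tendsto (fun k => m ^ (1 / qs k)) Filter.atTop (nhds 1) := by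
      refine h3.congr fun k => (hmr k).symm
    have := ENNReal.Tendsto.const_mul (a := a) h4 (Or.inl one_ne_zero)
    simpa using this
  -- pass to the liminf
  have key : a ≤ ENNReal.ofReal (Real.exp
      (∑' i, (1 / qs i) * Real.log (2 ^ i * C * qs i ^ 2))) * D * L 0 := by
    calc a = Filter.liminf (fun k => a * m ^ (1 / qs k)) Filter.atTop := hmtend.liminf_eq.symm
      _ ≤ Filter.liminf (fun k => ENNReal.ofReal (Real.exp (S k)) * D * L 0) Filter.atTop :=
          Filter.liminf_le_liminf
            (Filter.Eventually.of_forall fun k => (hlow k).trans (hLk k))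
      _ = _ := hStend.liminf_eq
  have hL0eq : L 0 = (∫⁻ x in A 0, ENNReal.ofReal (f x) ^ q ∂μ) ^ (1 / q) := by
    show I 0 ^ (1 / qs 0) = _
    rw [hq00, hI0]
  rw [hL0eq] at key
  exact key
end

section
/- Let n ≥ 1, q ≥ 0, δ ∈ (0, 1], and C ≥ 1. Let (X, μ) be a measure space with μ(X) ≤ δⁿ, and let f : X → [0, ∞) be measurable with f ∈ L^{q+4}(μ). If ∫ f^{q+4} dμ ≤ C·δ^{−2}·∫ (f^{q+2} + f^{q+1} + f^q) dμ, then (∫ f^{q+4} dμ)^{1/(q+4)} ≤ 3C·δ^{n/(q+4) − 1}. -/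
open MeasureTheory
open scoped ENNReal NNReal

lemma hoelder_aux {X : Type*} [MeasurableSpace X] (μ : Measure X) (g : X → ℝ≥0∞)
    (hg : AEMeasurable g μ) {p r : ℝ} (hp : 0 ≤ p) (hpr : p ≤ r) (hr : 0 < r) :
    (∫⁻ x, g x ^ p ∂μ) ≤ (∫⁻ x, g x ^ r ∂μ) ^ (p / r) * (μ Set.univ) ^ (1 - p / r) := by
  rcases hp.eq_or_lt with h0 | hp0
  · simp [← h0, lintegral_const]
  rcases eq_or_lt_of_le hpr with heq | hlt
  · subst heq
    simp [div_self hp0.ne']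
  · set s : ℝ := p * r / (r - p) with hs
    have hrp : 0 < r - p := by linarith
    have hs0 : s ≠ 0 := by
      simp only [hs]
      positivity
    have hsr : s * (r - p) = p * r := by rw [hs]; exact div_mul_cancel₀ _ hrp.ne'
    have hpqr : 1 / p = 1 / r + 1 / s := by
      field_simp [hs]
      linear_combination hsr
    have key := ENNReal.lintegral_Lp_mul_le_Lq_mul_Lr hp0 hlt hpqr μ hg
      (aemeasurable_const (b := (1 : ℝ≥0∞)))
    simp only [Pi.mul_apply, mul_one, ENNReal.one_rpow, lintegral_const, one_mul] at key
    have key2 := ENNReal.rpow_le_rpow key hp0.le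
    rw [← ENNReal.rpow_mul, one_div_mul_cancel hp0.ne', ENNReal.rpow_one,
      ENNReal.mul_rpow_of_nonneg _ _ hp0.le, ← ENNReal.rpow_mul, ← ENNReal.rpow_mul] at key2
    have e1 : 1 / r * p = p / r := by ring
    have e2 : 1 / s * p = 1 - p / r := by
      field_simp [hs]
      linear_combination -hsr
    rwa [e1, e2] at key2

set_option maxHeartbeats 2000000 in
/-- Hölder–absorption step: on a measure space of total mass at most `δⁿ`, if a nonnegative
function `f ∈ L^{q+4}` satisfies `∫ f^{q+4} ≤ C δ⁻² ∫ (f^{q+2} + f^{q+1} + f^q)`, then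
`(∫ f^{q+4})^{1/(q+4)} ≤ 3C δ^{n/(q+4) − 1}`. -/
theorem stmt_15 {X : Type*} [MeasurableSpace X] (μ : Measure X)
    (n : ℕ) (hn : 1 ≤ n) (q δ C : ℝ) (hq : 0 ≤ q)
    (hδ : δ ∈ Set.Ioc (0 : ℝ) 1) (hC : 1 ≤ C)
    (hμ : μ Set.univ ≤ ENNReal.ofReal (δ ^ n))
    (f : X → ℝ) (hf : Measurable f) (hf0 : ∀ x, 0 ≤ f x)
    (hmem : (∫⁻ x, ENNReal.ofReal (f x) ^ (q + 4) ∂μ) < ⊤)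
    (hineq : (∫⁻ x, ENNReal.ofReal (f x) ^ (q + 4) ∂μ) ≤
        ENNReal.ofReal (C * δ ^ (-2 : ℝ)) *
          ∫⁻ x, (ENNReal.ofReal (f x) ^ (q + 2) + ENNReal.ofReal (f x) ^ (q + 1) +
            ENNReal.ofReal (f x) ^ q) ∂μ) :
    (∫⁻ x, ENNReal.ofReal (f x) ^ (q + 4) ∂μ) ^ (1 / (q + 4)) ≤
      ENNReal.ofReal (3 * C * δ ^ ((n : ℝ) / (q + 4) - 1)) := by
  obtain ⟨hδ0, hδ1⟩ := hδ
  have hq4 : (0 : ℝ) < q + 4 := by linarith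
  set g : X → ℝ≥0∞ := fun x => ENNReal.ofReal (f x) with hgdef
  have hgm : AEMeasurable g μ := (hf.ennreal_ofReal).aemeasurable
  set I : ℝ≥0∞ := ∫⁻ x, g x ^ (q + 4) ∂μ with hI
  rcases eq_or_ne I 0 with hI0 | hI0
  · rw [hI0, ENNReal.zero_rpow_of_pos (by positivity)]
    exact zero_le
  have hItop : I ≠ ⊤ := hmem.ne
  have hMtop : μ Set.univ ≠ ⊤ := ne_top_of_le_ne_top ENNReal.ofReal_ne_top hμ
  set Ir : ℝ := I.toReal with hIr
  have hIrpos : 0 < Ir := ENNReal.toReal_pos hI0 hItop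
  have hIof : I = ENNReal.ofReal Ir := (ENNReal.ofReal_toReal hItop).symm
  -- Hölder bounds
  have hold : ∀ p : ℝ, 0 ≤ p → p ≤ q + 4 →
      (∫⁻ x, g x ^ p ∂μ) ≤
        ENNReal.ofReal (Ir ^ (p / (q + 4)) * (δ ^ n) ^ (1 - p / (q + 4))) := by
    intro p hp0 hple
    have h1 := hoelder_aux μ g hgm hp0 hple hq4
    have hbd : (μ Set.univ) ^ (1 - p / (q + 4)) ≤
        ENNReal.ofReal ((δ ^ n) ^ (1 - p / (q + 4))) := by
      have hexp : 0 ≤ 1 - p / (q + 4) := by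
        rw [sub_nonneg, div_le_one hq4]; exact hple
      calc (μ Set.univ) ^ (1 - p / (q + 4))
          ≤ (ENNReal.ofReal (δ ^ n)) ^ (1 - p / (q + 4)) :=
            ENNReal.rpow_le_rpow hμ hexp
        _ = ENNReal.ofReal ((δ ^ n) ^ (1 - p / (q + 4))) :=
            ENNReal.ofReal_rpow_of_pos (by positivity)
    calc (∫⁻ x, g x ^ p ∂μ) ≤ I ^ (p / (q + 4)) * (μ Set.univ) ^ (1 - p / (q + 4)) := h1
      _ ≤ ENNReal.ofReal (Ir ^ (p / (q + 4))) *
            ENNReal.ofReal ((δ ^ n) ^ (1 - p / (q + 4))) := by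
          refine mul_le_mul' ?_ hbd
          rw [hIof, ENNReal.ofReal_rpow_of_pos hIrpos]
      _ = ENNReal.ofReal (Ir ^ (p / (q + 4)) * (δ ^ n) ^ (1 - p / (q + 4))) := by
          rw [← ENNReal.ofReal_mul (by positivity)]
  -- split the sum
  have hsplit : (∫⁻ x, (g x ^ (q + 2) + g x ^ (q + 1) + g x ^ q) ∂μ) =
      (∫⁻ x, g x ^ (q + 2) ∂μ) + (∫⁻ x, g x ^ (q + 1) ∂μ) + (∫⁻ x, g x ^ q ∂μ) := by
    rw [lintegral_add_left' (f := fun x => g x ^ (q + 2) + g x ^ (q + 1)) ((hgm.pow_const _).add (hgm.pow_const _)),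
      lintegral_add_left' (hgm.pow_const _)]
  set A2 : ℝ := Ir ^ ((q + 2) / (q + 4)) * (δ ^ n) ^ (1 - (q + 2) / (q + 4)) with hA2
  set A1 : ℝ := Ir ^ ((q + 1) / (q + 4)) * (δ ^ n) ^ (1 - (q + 1) / (q + 4)) with hA1
  set A0 : ℝ := Ir ^ (q / (q + 4)) * (δ ^ n) ^ (1 - q / (q + 4)) with hA0
  have hItot : I ≤ ENNReal.ofReal (C * δ ^ (-2 : ℝ) * (A2 + A1 + A0)) := by
    calc I ≤ ENNReal.ofReal (C * δ ^ (-2 : ℝ)) *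
          ((∫⁻ x, g x ^ (q + 2) ∂μ) + (∫⁻ x, g x ^ (q + 1) ∂μ) + (∫⁻ x, g x ^ q ∂μ)) := by
            rw [← hsplit]; exact hineq
      _ ≤ ENNReal.ofReal (C * δ ^ (-2 : ℝ)) *
          (ENNReal.ofReal A2 + ENNReal.ofReal A1 + ENNReal.ofReal A0) := by
            refine mul_le_mul' le_rfl ?_
            exact add_le_add (add_le_add (hold _ (by linarith) (by linarith))
              (hold _ (by linarith) (by linarith))) (hold _ hq (by linarith))
      _ = ENNReal.ofReal (C * δ ^ (-2 : ℝ) * (A2 + A1 + A0)) := by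
            rw [← ENNReal.ofReal_add (by positivity) (by positivity),
              ← ENNReal.ofReal_add (by positivity) (by positivity),
              ← ENNReal.ofReal_mul (by positivity)]
  have hreal : Ir ≤ C * δ ^ (-2 : ℝ) * (A2 + A1 + A0) :=
    ENNReal.toReal_le_of_le_ofReal (by positivity) hItot
  -- real analysis
  set a : ℝ := Ir ^ (1 / (q + 4)) with ha
  have hapos : 0 < a := Real.rpow_pos_of_pos hIrpos _
  set b : ℝ := δ ^ ((n : ℝ) / (q + 4) - 1) with hb
  have hbpos : 0 < b := Real.rpow_pos_of_pos hδ0 _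
  have hpow : ∀ p : ℝ, Ir ^ (p / (q + 4)) = a ^ p := by
    intro p
    rw [ha, ← Real.rpow_mul hIrpos.le]
    congr 1
    field_simp
  have hδn : ∀ e : ℝ, ((δ : ℝ) ^ n) ^ e = δ ^ ((n : ℝ) * e) := by
    intro e
    rw [← Real.rpow_natCast δ n, ← Real.rpow_mul hδ0.le]
  have hIra : Ir = a ^ (q + 4) := by
    have h := hpow (q + 4)
    rwa [div_self hq4.ne', Real.rpow_one] at h
  -- δ-power absorption
  have hdel : ∀ p k : ℝ, p + k = q + 4 → 2 ≤ k →
      δ ^ (-2 : ℝ) * (δ ^ n) ^ (1 - p / (q + 4)) ≤ b ^ k := by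
    intro p k hpk hk2
    rw [hδn, ← Real.rpow_add hδ0, hb, ← Real.rpow_mul hδ0.le]
    apply Real.rpow_le_rpow_of_exponent_ge hδ0 hδ1
    have hfrac : 1 - p / (q + 4) = k / (q + 4) := by
      field_simp
      linarith
    rw [hfrac]
    have hrw : ((n:ℝ) / (q + 4) - 1) * k = (n:ℝ) * (k / (q + 4)) - k := by ring
    rw [hrw]
    linarith
  have hd2 := hdel (q + 2) 2 (by ring) (by norm_num)
  have hd1 := hdel (q + 1) 3 (by ring) (by norm_num)
  have hd0 := hdel q 4 (by ring) (by norm_num)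
  have hagoal : a ≤ 3 * C * b := by
    by_contra hcon
    push_neg at hcon
    have hfinal : Ir ≤ C * (a ^ (q + 2) * b ^ (2:ℝ) + a ^ (q + 1) * b ^ (3:ℝ) +
        a ^ q * b ^ (4:ℝ)) := by
      calc Ir ≤ C * δ ^ (-2 : ℝ) * (A2 + A1 + A0) := hreal
        _ = C * (a ^ (q + 2) * (δ ^ (-2:ℝ) * (δ ^ n) ^ (1 - (q + 2) / (q + 4)))
              + a ^ (q + 1) * (δ ^ (-2:ℝ) * (δ ^ n) ^ (1 - (q + 1) / (q + 4)))
              + a ^ q * (δ ^ (-2:ℝ) * (δ ^ n) ^ (1 - q / (q + 4)))) := by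
            rw [hA2, hA1, hA0, hpow, hpow, hpow]; ring
        _ ≤ C * (a ^ (q + 2) * b ^ (2:ℝ) + a ^ (q + 1) * b ^ (3:ℝ) + a ^ q * b ^ (4:ℝ)) := by
            refine mul_le_mul_of_nonneg_left (add_le_add (add_le_add ?_ ?_) ?_) (by linarith)
            · exact mul_le_mul_of_nonneg_left hd2 (Real.rpow_pos_of_pos hapos _).le
            · exact mul_le_mul_of_nonneg_left hd1 (Real.rpow_pos_of_pos hapos _).le
            · exact mul_le_mul_of_nonneg_left hd0 (Real.rpow_pos_of_pos hapos _).le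
    -- convert rpow to products
    have hsplit_a : ∀ m : ℕ, a ^ (q + (m:ℝ)) = a ^ q * a ^ m := by
      intro m
      rw [Real.rpow_add hapos, Real.rpow_natCast]
    have hb_nat : ∀ m : ℕ, b ^ ((m:ℕ):ℝ) = b ^ m := fun m => Real.rpow_natCast b m
    have h2 : a ^ (q + 2) = a ^ q * a ^ 2 := by
      have := hsplit_a 2; norm_num at this; exact this
    have h1 : a ^ (q + 1) = a ^ q * a ^ 1 := by
      have := hsplit_a 1; norm_num at this; simpa using this
    have h4 : a ^ (q + 4) = a ^ q * a ^ 4 := by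
      have := hsplit_a 4; norm_num at this; exact this
    have hb2 : b ^ (2:ℝ) = b ^ (2:ℕ) := by
      rw [show (2:ℝ) = ((2:ℕ):ℝ) by norm_num, Real.rpow_natCast]
    have hb3 : b ^ (3:ℝ) = b ^ (3:ℕ) := by
      rw [show (3:ℝ) = ((3:ℕ):ℝ) by norm_num, Real.rpow_natCast]
    have hb4 : b ^ (4:ℝ) = b ^ (4:ℕ) := by
      rw [show (4:ℝ) = ((4:ℕ):ℝ) by norm_num, Real.rpow_natCast]
    rw [hIra, h4, h2, h1, hb2, hb3, hb4] at hfinal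
    set t : ℝ := a ^ q with ht'
    have ht : 0 < t := Real.rpow_pos_of_pos hapos q
    -- key comparisons
    have hCb : C * b ≤ a / 3 := by linarith
    have hble : b ≤ a / 3 := by
      have : b ≤ C * b := le_mul_of_one_le_left hbpos.le hC
      linarith
    have k2 : C * b * b ≤ (a / 3) * (a / 3) :=
      mul_le_mul hCb hble hbpos.le (by positivity)
    have kbb : b * b ≤ (a / 3) * (a / 3) :=
      mul_le_mul hble hble hbpos.le (by positivity)
    have k3 : C * b * (b * b) ≤ (a / 3) * ((a / 3) * (a / 3)) :=
      mul_le_mul hCb kbb (by positivity) (by positivity)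
    have k4 : C * b * (b * (b * b)) ≤ (a / 3) * ((a / 3) * ((a / 3) * (a / 3))) :=
      mul_le_mul hCb (mul_le_mul hble kbb (by positivity) (by positivity))
        (by positivity) (by positivity)
    have m2 : t * a ^ 2 * (C * b * b) ≤ t * a ^ 2 * ((a / 3) * (a / 3)) :=
      mul_le_mul_of_nonneg_left k2 (by positivity)
    have m3 : t * a ^ 1 * (C * b * (b * b)) ≤
        t * a ^ 1 * ((a / 3) * ((a / 3) * (a / 3))) :=
      mul_le_mul_of_nonneg_left k3 (by positivity)
    have m4 : t * (C * b * (b * (b * b))) ≤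
        t * ((a / 3) * ((a / 3) * ((a / 3) * (a / 3)))) :=
      mul_le_mul_of_nonneg_left k4 (by positivity)
    have hprod : 0 < t * a ^ 4 := by positivity
    nlinarith [hfinal, m2, m3, m4, hprod]
  have hLHS : I ^ (1 / (q + 4)) = ENNReal.ofReal a := by
    rw [hIof, ENNReal.ofReal_rpow_of_pos hIrpos]
  rw [hLHS]
  exact ENNReal.ofReal_le_ofReal hagoal
end
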